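/- For every positive integer n, the polynomial D_n(t) = t^9 - (n+3)t^8 - (n-4)t^7 + (2n-8)t^6 + (2n+8)t^5 + (2n-8)t^4 - (2n-11)t^3 + (3n-5)t^2 + (3n+4)t - 4(n+1) has exactly three distinct positive real roots. -/

import Mathlib

open Polynomial

/-- The denominator polynomial `D_n(t)`, over `ℝ`. -/
noncomputable def Dpoly (n : ℕ) : Polynomial ℝ :=
  X ^ 9 - C ((n : ℝ) + 3) * X ^ 8 - C ((n : ℝ) - 4) * X ^ 7 + C (2 * (n : ℝ) - 8) * X ^ 6
    + C (2 * (n : ℝ) + 8) * X ^ 5 + C (2 * (n : ℝ) - 8) * X ^ 4 - C (2 * (n : ℝ) - 11) * X ^ 3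
    + C (3 * (n : ℝ) - 5) * X ^ 2 + C (3 * (n : ℝ) + 4) * X - C (4 * ((n : ℝ) + 1))

open Set in
/-- explicit function equal to evaluation of `Dpoly`. -/
noncomputable def ff (a t : ℝ) : ℝ :=
  t^9 - (a+3)*t^8 - (a-4)*t^7 + (2*a-8)*t^6 + (2*a+8)*t^5 + (2*a-8)*t^4
    - (2*a-11)*t^3 + (3*a-5)*t^2 + (3*a+4)*t - 4*(a+1)

noncomputable def ff1 (a t : ℝ) : ℝ :=
  9*t^8 - (a+3)*(8*t^7) - (a-4)*(7*t^6) + (2*a-8)*(6*t^5) + (2*a+8)*(5*t^4)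
    + (2*a-8)*(4*t^3) - (2*a-11)*(3*t^2) + (3*a-5)*(2*t) + (3*a+4)

noncomputable def ff2 (a t : ℝ) : ℝ :=
  9*(8*t^7) - (a+3)*(8*(7*t^6)) - (a-4)*(7*(6*t^5)) + (2*a-8)*(6*(5*t^4)) + (2*a+8)*(5*(4*t^3))
    + (2*a-8)*(4*(3*t^2)) - (2*a-11)*(3*(2*t)) + (3*a-5)*2

lemma ff_deriv (a t : ℝ) : HasDerivAt (ff a) (ff1 a t) t := by
  have h := (((((((((hasDerivAt_pow 9 t).sub ((hasDerivAt_pow 8 t).const_mul (a+3))).sub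
      ((hasDerivAt_pow 7 t).const_mul (a-4))).add ((hasDerivAt_pow 6 t).const_mul (2*a-8))).add
      ((hasDerivAt_pow 5 t).const_mul (2*a+8))).add ((hasDerivAt_pow 4 t).const_mul (2*a-8))).sub
      ((hasDerivAt_pow 3 t).const_mul (2*a-11))).add ((hasDerivAt_pow 2 t).const_mul (3*a-5))).add
      ((hasDerivAt_id t).const_mul (3*a+4))).sub_const (4*(a+1))
  convert h using 1
  · rfl
  · rfl
  · rfl
  simp [ff1]

lemma ff1_deriv (a t : ℝ) : HasDerivAt (ff1 a) (ff2 a t) t := by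
  have h1 := ((((((((hasDerivAt_pow 8 t).const_mul (9:ℝ)).sub
      (((hasDerivAt_pow 7 t).const_mul (8:ℝ)).const_mul (a+3))).sub
      (((hasDerivAt_pow 6 t).const_mul (7:ℝ)).const_mul (a-4))).add
      (((hasDerivAt_pow 5 t).const_mul (6:ℝ)).const_mul (2*a-8))).add
      (((hasDerivAt_pow 4 t).const_mul (5:ℝ)).const_mul (2*a+8))).add
      (((hasDerivAt_pow 3 t).const_mul (4:ℝ)).const_mul (2*a-8))).sub
      (((hasDerivAt_pow 2 t).const_mul (3:ℝ)).const_mul (2*a-11))).add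
      (((hasDerivAt_id t).const_mul (2:ℝ)).const_mul (3*a-5))
  have h := h1.add_const (3*a+4)
  convert h using 1
  · rfl
  · rfl
  · rfl
  simp [ff2]
  try ring

lemma ff_deriv_eq (a : ℝ) : deriv (ff a) = ff1 a :=
  funext fun t => (ff_deriv a t).deriv

lemma ff_cont (a : ℝ) : Continuous (ff a) := by
  unfold ff; fun_prop

lemma ff_deriv2_eq (a : ℝ) : deriv^[2] (ff a) = ff2 a := by
  have h1 : deriv (deriv (ff a)) = ff2 a := by
    rw [ff_deriv_eq]; exact funext fun t => (ff1_deriv a t).deriv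
  rw [Function.iterate_succ_apply', Function.iterate_one]
  exact h1

/-! ### One-variable polynomial certificates -/

/-- `B'(t) ≥ 0` on `[0, 11/10]`. -/
lemma certB1 {t : ℝ} (h0 : 0 ≤ t) (h1 : t ≤ 11/10) :
    0 ≤ -8*t^7 - 7*t^6 + 12*t^5 + 10*t^4 + 8*t^3 - 6*t^2 + 6*t + 3 := by
  have hv : (0:ℝ) ≤ 11/10 - t := by linarith
  nlinarith [pow_nonneg hv 7, mul_nonneg h0 (pow_nonneg hv 6),
    mul_nonneg (pow_nonneg h0 2) (pow_nonneg hv 5),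
    mul_nonneg (pow_nonneg h0 3) (pow_nonneg hv 4),
    mul_nonneg (pow_nonneg h0 4) (pow_nonneg hv 3),
    mul_nonneg (pow_nonneg h0 5) (pow_nonneg hv 2),
    mul_nonneg (pow_nonneg h0 6) hv, pow_nonneg h0 7]

/-- `A'(t)+B'(t) ≥ 1` on `[0, 11/10]`. -/
lemma certA1B1 {t : ℝ} (h0 : 0 ≤ t) (h1 : t ≤ 11/10) :
    1 ≤ 9*t^8 - 32*t^7 + 21*t^6 - 36*t^5 + 50*t^4 - 24*t^3 + 27*t^2 - 4*t + 7 := by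
  have hv : (0:ℝ) ≤ 11/10 - t := by linarith
  nlinarith [pow_nonneg hv 8, mul_nonneg h0 (pow_nonneg hv 7),
    mul_nonneg (pow_nonneg h0 2) (pow_nonneg hv 6),
    mul_nonneg (pow_nonneg h0 3) (pow_nonneg hv 5),
    mul_nonneg (pow_nonneg h0 4) (pow_nonneg hv 4),
    mul_nonneg (pow_nonneg h0 5) (pow_nonneg hv 3),
    mul_nonneg (pow_nonneg h0 6) (pow_nonneg hv 2),
    mul_nonneg (pow_nonneg h0 7) hv, pow_nonneg h0 8]

/-- `B''(t) ≤ 0` on `[11/10, 2]`. -/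
lemma certB2 {t : ℝ} (h0 : 11/10 ≤ t) (h1 : t ≤ 2) :
    -56*t^6 - 42*t^5 + 60*t^4 + 40*t^3 + 24*t^2 - 12*t + 6 ≤ 0 := by
  have hu : (0:ℝ) ≤ t - 11/10 := by linarith
  have hv : (0:ℝ) ≤ 2 - t := by linarith
  nlinarith [pow_nonneg hv 6, mul_nonneg hu (pow_nonneg hv 5),
    mul_nonneg (pow_nonneg hu 2) (pow_nonneg hv 4),
    mul_nonneg (pow_nonneg hu 3) (pow_nonneg hv 3),
    mul_nonneg (pow_nonneg hu 4) (pow_nonneg hv 2),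
    mul_nonneg (pow_nonneg hu 5) hv, pow_nonneg hu 6]

/-- `A''(t)+B''(t) ≤ -1` on `[11/10, 2]`. -/
lemma certA2B2 {t : ℝ} (h0 : 11/10 ≤ t) (h1 : t ≤ 2) :
    72*t^7 - 224*t^6 + 126*t^5 - 180*t^4 + 200*t^3 - 72*t^2 + 54*t - 4 ≤ -1 := by
  have hu : (0:ℝ) ≤ t - 11/10 := by linarith
  have hv : (0:ℝ) ≤ 2 - t := by linarith
  nlinarith [pow_nonneg hv 7, mul_nonneg hu (pow_nonneg hv 6),
    mul_nonneg (pow_nonneg hu 2) (pow_nonneg hv 5),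
    mul_nonneg (pow_nonneg hu 3) (pow_nonneg hv 4),
    mul_nonneg (pow_nonneg hu 4) (pow_nonneg hv 3),
    mul_nonneg (pow_nonneg hu 5) (pow_nonneg hv 2),
    mul_nonneg (pow_nonneg hu 6) hv, pow_nonneg hu 7]

/-- `B(t) ≤ 0` on `[2, 3]`. -/
lemma certB23 {t : ℝ} (h0 : 2 ≤ t) (h1 : t ≤ 3) :
    -t^8 - t^7 + 2*t^6 + 2*t^5 + 2*t^4 - 2*t^3 + 3*t^2 + 3*t - 4 ≤ 0 := by
  have hu : (0:ℝ) ≤ t - 2 := by linarith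
  have hv : (0:ℝ) ≤ 3 - t := by linarith
  nlinarith [pow_nonneg hv 8, mul_nonneg hu (pow_nonneg hv 7),
    mul_nonneg (pow_nonneg hu 2) (pow_nonneg hv 6),
    mul_nonneg (pow_nonneg hu 3) (pow_nonneg hv 5),
    mul_nonneg (pow_nonneg hu 4) (pow_nonneg hv 4),
    mul_nonneg (pow_nonneg hu 5) (pow_nonneg hv 3),
    mul_nonneg (pow_nonneg hu 6) (pow_nonneg hv 2),
    mul_nonneg (pow_nonneg hu 7) hv, pow_nonneg hu 8]

/-- `A(t)+B(t) ≤ -1` on `[2, 3]`. -/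
lemma certAB23 {t : ℝ} (h0 : 2 ≤ t) (h1 : t ≤ 3) :
    t^9 - 4*t^8 + 3*t^7 - 6*t^6 + 10*t^5 - 6*t^4 + 9*t^3 - 2*t^2 + 7*t - 8 ≤ -1 := by
  have hu : (0:ℝ) ≤ t - 2 := by linarith
  have hv : (0:ℝ) ≤ 3 - t := by linarith
  nlinarith [pow_nonneg hv 9, mul_nonneg hu (pow_nonneg hv 8),
    mul_nonneg (pow_nonneg hu 2) (pow_nonneg hv 7),
    mul_nonneg (pow_nonneg hu 3) (pow_nonneg hv 6),
    mul_nonneg (pow_nonneg hu 4) (pow_nonneg hv 5),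
    mul_nonneg (pow_nonneg hu 5) (pow_nonneg hv 4),
    mul_nonneg (pow_nonneg hu 6) (pow_nonneg hv 3),
    mul_nonneg (pow_nonneg hu 7) (pow_nonneg hv 2),
    mul_nonneg (pow_nonneg hu 8) hv, pow_nonneg hu 9]

/-- `B(t) ≤ 0` for `t ≥ 3`. -/
lemma certB3 {t : ℝ} (h0 : 3 ≤ t) :
    -t^8 - t^7 + 2*t^6 + 2*t^5 + 2*t^4 - 2*t^3 + 3*t^2 + 3*t - 4 ≤ 0 := by
  have hu : (0:ℝ) ≤ t - 3 := by linarith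
  nlinarith [pow_nonneg hu 8, pow_nonneg hu 7, pow_nonneg hu 6, pow_nonneg hu 5,
    pow_nonneg hu 4, pow_nonneg hu 3, pow_nonneg hu 2]

/-- `A(t)+(t-2)B(t) < 0` for `t ≥ 3`. -/
lemma certAB3 {t : ℝ} (h0 : 3 ≤ t) :
    -2*t^8 + 8*t^7 - 10*t^6 + 6*t^5 - 14*t^4 + 18*t^3 - 8*t^2 - 6*t + 4 < 0 := by
  have hu : (0:ℝ) ≤ t - 3 := by linarith
  nlinarith [pow_nonneg hu 8, pow_nonneg hu 7, pow_nonneg hu 6, pow_nonneg hu 5,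
    pow_nonneg hu 4, pow_nonneg hu 3, pow_nonneg hu 2]

/-- `B''(t) ≤ 0` for `t ≥ 3`. -/
lemma certB2tail {t : ℝ} (h0 : 3 ≤ t) :
    -56*t^6 - 42*t^5 + 60*t^4 + 40*t^3 + 24*t^2 - 12*t + 6 ≤ 0 := by
  have hu : (0:ℝ) ≤ t - 3 := by linarith
  nlinarith [pow_nonneg hu 6, pow_nonneg hu 5, pow_nonneg hu 4, pow_nonneg hu 3,
    pow_nonneg hu 2]

/-- `A''(t)+(t-2)B''(t) > 0` for `t ≥ 3`. -/
lemma certQ {t : ℝ} (h0 : 3 ≤ t) :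
    0 < 16*t^7 - 98*t^6 + 312*t^5 - 320*t^4 + 104*t^3 - 156*t^2 + 96*t - 22 := by
  have hu : (0:ℝ) ≤ t - 3 := by linarith
  nlinarith [pow_nonneg hu 7, pow_nonneg hu 6, pow_nonneg hu 5, pow_nonneg hu 4,
    pow_nonneg hu 3, pow_nonneg hu 2]

/-! ### Region facts for `ff` -/

lemma ff1_pos {a t : ℝ} (ha : 1 ≤ a) (h0 : 0 ≤ t) (h1 : t ≤ 11/10) : 0 < ff1 a t := by
  have hB := certB1 h0 h1
  have hAB := certA1B1 h0 h1
  have ha' : 0 ≤ a - 1 := by linarith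
  have hprod := mul_nonneg ha' hB
  unfold ff1
  nlinarith [hprod]

lemma ff2_neg {a t : ℝ} (ha : 1 ≤ a) (h0 : 11/10 ≤ t) (h1 : t ≤ 2) : ff2 a t < 0 := by
  have hB := certB2 h0 h1
  have hAB := certA2B2 h0 h1
  have ha' : 0 ≤ a - 1 := by linarith
  have hprod := mul_nonneg ha' (neg_nonneg.2 hB)
  unfold ff2
  nlinarith [hprod]

lemma ff_neg_mid {a t : ℝ} (ha : 1 ≤ a) (h0 : 2 ≤ t) (h1 : t ≤ a + 2) : ff a t < 0 := by
  unfold ff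
  rcases le_or_gt t 3 with h3 | h3
  · have hB := certB23 h0 h3
    have hAB := certAB23 h0 h3
    have ha' : 0 ≤ a - 1 := by linarith
    have hprod := mul_nonneg ha' (neg_nonneg.2 hB)
    nlinarith [hprod]
  · have hB := certB3 h3.le
    have hAB := certAB3 h3.le
    have ha' : 0 ≤ a - (t - 2) := by linarith
    have hprod := mul_nonneg ha' (neg_nonneg.2 hB)
    nlinarith [hprod]

lemma ff2_pos_tail {a t : ℝ} (ha : 1 ≤ a) (h0 : a + 2 ≤ t) : 0 < ff2 a t := by
  have h3 : 3 ≤ t := by linarith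
  have hB := certB2tail h3
  have hQ := certQ h3
  have ha' : 0 ≤ (t - 2) - a := by linarith
  have hprod := mul_nonneg ha' (neg_nonneg.2 hB)
  unfold ff2
  nlinarith [hprod]

lemma ff_pos_top {a : ℝ} (ha : 1 ≤ a) : 0 < ff a (a + 5) := by
  have hm : (0:ℝ) ≤ a - 1 := by linarith
  unfold ff
  nlinarith [pow_nonneg hm 8, pow_nonneg hm 7, pow_nonneg hm 6, pow_nonneg hm 5,
    pow_nonneg hm 4, pow_nonneg hm 3, pow_nonneg hm 2, hm]

/-! ### Structural lemmas -/

open Set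

lemma ff_mono {a : ℝ} (ha : 1 ≤ a) : StrictMonoOn (ff a) (Icc 0 (11/10)) := by
  apply strictMonoOn_of_deriv_pos (convex_Icc _ _) (ff_cont a).continuousOn
  intro x hx
  rw [interior_Icc] at hx
  rw [ff_deriv_eq]
  exact ff1_pos ha hx.1.le hx.2.le

lemma ff_conc {a : ℝ} (ha : 1 ≤ a) : StrictConcaveOn ℝ (Icc (11/10) 2) (ff a) := by
  apply strictConcaveOn_of_deriv2_neg (convex_Icc _ _) (ff_cont a).continuousOn
  intro x hx
  rw [interior_Icc] at hx
  rw [ff_deriv2_eq]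
  exact ff2_neg ha hx.1.le hx.2.le

lemma ff_conv {a : ℝ} (ha : 1 ≤ a) : StrictConvexOn ℝ (Ici (a+2)) (ff a) := by
  apply strictConvexOn_of_deriv2_pos (convex_Ici _) (ff_cont a).continuousOn
  intro x hx
  rw [interior_Ici] at hx
  rw [ff_deriv2_eq]
  exact ff2_pos_tail ha hx.le

/-- chord argument: a strictly concave function positive at `x` cannot have
two zeros to the right of `x`. -/
lemma chord_conc {f : ℝ → ℝ} {s : Set ℝ} (hcc : StrictConcaveOn ℝ s f) {x z w : ℝ}
    (hx : x ∈ s) (hw : w ∈ s) (hxz : x < z) (hzw : z < w) (hz0 : f z = 0) (hw0 : f w = 0)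
    (hpos : 0 < f x) : False := by
  have hden : 0 < w - x := by linarith
  have hl : 0 < (w - z)/(w - x) := div_pos (by linarith) hden
  have hm : 0 < (z - x)/(w - x) := div_pos (by linarith) hden
  have h := hcc.2 hx hw (ne_of_lt (lt_trans hxz hzw)) hl hm
    (by field_simp; ring : (w - z)/(w - x) + (z - x)/(w - x) = 1)
  simp only [smul_eq_mul] at h
  have hco : ((w - z)/(w - x)) * x + ((z - x)/(w - x)) * w = z := by
    field_simp; ring
  rw [hco, hz0, hw0, mul_zero, add_zero] at h
  nlinarith [mul_pos hl hpos]

/-- chord argument: a strictly convex function negative at `x` cannot have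
two zeros to the right of `x`. -/
lemma chord_conv {f : ℝ → ℝ} {s : Set ℝ} (hcv : StrictConvexOn ℝ s f) {x z w : ℝ}
    (hx : x ∈ s) (hw : w ∈ s) (hxz : x < z) (hzw : z < w) (hz0 : f z = 0) (hw0 : f w = 0)
    (hneg : f x < 0) : False := by
  have hden : 0 < w - x := by linarith
  have hl : 0 < (w - z)/(w - x) := div_pos (by linarith) hden
  have hm : 0 < (z - x)/(w - x) := div_pos (by linarith) hden
  have h := hcv.2 hx hw (ne_of_lt (lt_trans hxz hzw)) hl hm
    (by field_simp; ring : (w - z)/(w - x) + (z - x)/(w - x) = 1)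
  simp only [smul_eq_mul] at h
  have hco : ((w - z)/(w - x)) * x + ((z - x)/(w - x)) * w = z := by
    field_simp; ring
  rw [hco, hz0, hw0, mul_zero, add_zero] at h
  nlinarith [mul_pos hl (neg_pos.2 hneg)]

theorem stmt_4 (n : ℕ) (hn : 0 < n) :
    {t : ℝ | 0 < t ∧ (Dpoly n).IsRoot t}.ncard = 3 := by
  set a : ℝ := (n : ℝ) with haa
  have ha : 1 ≤ a := by
    have h1 : 1 ≤ n := hn
    rw [haa]
    exact_mod_cast h1
  have heval : ∀ t : ℝ, (Dpoly n).eval t = ff a t := by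
    intro t
    simp [Dpoly, ff]
    try ring
  have hset : {t : ℝ | 0 < t ∧ (Dpoly n).IsRoot t} = {t : ℝ | 0 < t ∧ ff a t = 0} := by
    ext t
    simp only [mem_setOf_eq, IsRoot, heval]
  rw [hset]
  -- basic values
  have hf0 : ff a 0 < 0 := by unfold ff; nlinarith
  have hf1 : 0 < ff a 1 := by unfold ff; nlinarith
  have hf2 : ff a 2 < 0 := ff_neg_mid ha le_rfl (by linarith)
  have hmono := ff_mono ha
  have hf11 : 0 < ff a (11/10) := by
    have := hmono ⟨le_refl 0, by norm_num⟩ ⟨by norm_num, by norm_num⟩ (by norm_num : (0:ℝ) < 11/10)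
    have h2 := hmono ⟨by norm_num, by norm_num⟩ ⟨by norm_num, le_refl _⟩ (by norm_num : (1:ℝ) < 11/10)
    linarith
  have hfa2 : ff a (a+2) < 0 := ff_neg_mid ha (by linarith) le_rfl
  have hfa5 : 0 < ff a (a+5) := ff_pos_top ha
  -- existence of the three roots
  obtain ⟨r1, hr1mem, hr1⟩ : ∃ r ∈ Ioo (0:ℝ) 1, ff a r = 0 := by
    have := intermediate_value_Ioo (by norm_num : (0:ℝ) ≤ 1) (ff_cont a).continuousOn
      (a := 0) (b := 1)
    have h0 : (0:ℝ) ∈ Ioo (ff a 0) (ff a 1) := ⟨hf0, hf1⟩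
    obtain ⟨r, hr, hr0⟩ := this h0
    exact ⟨r, hr, hr0⟩
  obtain ⟨r2, hr2mem, hr2⟩ : ∃ r ∈ Ioo (11/10:ℝ) 2, ff a r = 0 := by
    have := intermediate_value_Ioo' (by norm_num : (11/10:ℝ) ≤ 2) (ff_cont a).continuousOn
      (a := 11/10) (b := 2)
    have h0 : (0:ℝ) ∈ Ioo (ff a 2) (ff a (11/10)) := ⟨hf2, hf11⟩
    obtain ⟨r, hr, hr0⟩ := this h0
    exact ⟨r, hr, hr0⟩
  obtain ⟨r3, hr3mem, hr3⟩ : ∃ r ∈ Ioo (a+2) (a+5), ff a r = 0 := by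
    have := intermediate_value_Ioo (by linarith : a+2 ≤ a+5) (ff_cont a).continuousOn
      (a := a+2) (b := a+5)
    have h0 : (0:ℝ) ∈ Ioo (ff a (a+2)) (ff a (a+5)) := ⟨hfa2, hfa5⟩
    obtain ⟨r, hr, hr0⟩ := this h0
    exact ⟨r, hr, hr0⟩
  -- the root set is exactly {r1, r2, r3}
  have hseteq : {t : ℝ | 0 < t ∧ ff a t = 0} = {r1, r2, r3} := by
    ext t
    simp only [mem_setOf_eq, mem_insert_iff, mem_singleton_iff]
    constructor
    · rintro ⟨ht0, htf⟩
      rcases le_or_gt t (11/10) with hcase1 | hcase1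
      · left
        exact hmono.injOn ⟨ht0.le, hcase1⟩ ⟨hr1mem.1.le, by linarith [hr1mem.2]⟩
          (by rw [htf, hr1])
      · rcases lt_or_ge t 2 with hcase2 | hcase2
        · right; left
          rcases lt_trichotomy t r2 with h | h | h
          · exact ((chord_conc (ff_conc ha) ⟨le_refl _, by norm_num⟩ ⟨hr2mem.1.le, hr2mem.2.le⟩ hcase1 h htf hr2 hf11)).elim
          · exact h
          · exact ((chord_conc (ff_conc ha) ⟨le_refl _, by norm_num⟩ ⟨hcase1.le, hcase2.le⟩ hr2mem.1 h hr2 htf hf11)).elim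
        · rcases le_or_gt t (a+2) with hcase3 | hcase3
          · exact absurd htf (ne_of_lt (ff_neg_mid ha hcase2 hcase3))
          · right; right
            rcases lt_trichotomy t r3 with h | h | h
            · exact ((chord_conv (ff_conv ha) self_mem_Ici (le_of_lt hr3mem.1) hcase3 h htf hr3 hfa2)).elim
            · exact h
            · exact ((chord_conv (ff_conv ha) self_mem_Ici (le_of_lt hcase3) hr3mem.1 h hr3 htf hfa2)).elim
    · rintro (rfl | rfl | rfl)
      · exact ⟨hr1mem.1, hr1⟩
      · exact ⟨by linarith [hr2mem.1], hr2⟩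
      · exact ⟨by linarith [hr3mem.1], hr3⟩
  rw [hseteq]
  apply Set.ncard_eq_three.mpr
  refine ⟨r1, r2, r3, ?_, ?_, ?_, rfl⟩
  · have h1 := hr1mem.2; have h2 := hr2mem.1; intro h; rw [h] at h1; linarith
  · have h1 := hr1mem.2; have h2 := hr3mem.1; intro h; rw [h] at h1; linarith
  · have h1 := hr2mem.2; have h2 := hr3mem.1; intro h; rw [h] at h1; linarith
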